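/- Let G be a centerless group and A ⊆ G such that (G, A) is a special pair. Then the automorphism tower of G stabilizes and τ_G < (2^{max(|A|, ℵ₀)})⁺, the successor cardinal of 2^{max(|A|, ℵ₀)}. -/

import Mathlib

universe u

/-- The automorphism tower of a centerless group `G`: an ordinal-indexed increasing
continuous chain of groups, starting at `G`, where each successor stage is (identified
with) the automorphism group of the previous stage via the conjugation embedding. -/
structure AutTower (G : Type u) [Group G] where
  /-- the `o`-th stage `G^o` of the tower -/
  Stage : Ordinal.{u} → GrpCat.{u}
  /-- the inclusion maps of the tower -/
  map : ∀ ⦃o₁ o₂ : Ordinal.{u}⦄, o₁ ≤ o₂ → (↥(Stage o₁) →* ↥(Stage o₂))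
  map_id : ∀ (o : Ordinal.{u}) (x : ↥(Stage o)), map le_rfl x = x
  map_comp : ∀ ⦃o₁ o₂ o₃ : Ordinal.{u}⦄ (h₁ : o₁ ≤ o₂) (h₂ : o₂ ≤ o₃) (x : ↥(Stage o₁)),
      map h₂ (map h₁ x) = map (h₁.trans h₂) x
  map_injective : ∀ ⦃o₁ o₂ : Ordinal.{u}⦄ (h : o₁ ≤ o₂), Function.Injective (map h)
  /-- the identification of `G` with the `0`-th stage -/
  emb0 : G ≃* ↥(Stage 0)
  /-- the identification of the `(o+1)`-st stage with `Aut(G^o)` -/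
  succIso : ∀ o : Ordinal.{u}, ↥(Stage (o + 1)) ≃* MulAut ↥(Stage o)
  /-- under the above identification, the inclusion `G^o ≤ G^{o+1}` is `g ↦` conjugation by `g` -/
  succIso_map : ∀ (o : Ordinal.{u}) (x : ↥(Stage o)),
      succIso o (map (show o ≤ o + 1 from le_self_add) x) = MulAut.conj x
  /-- at limit stages the tower is continuous: `G^δ = ⋃_{α<δ} G^α` -/
  limit_covers : ∀ (o : Ordinal.{u}), Order.IsSuccLimit o → ∀ x : ↥(Stage o),
      ∃ (o' : Ordinal.{u}) (h : o' < o), x ∈ Set.range (map h.le)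

namespace AutTower

variable {G : Type u} [Group G]

/-- the embedding of `G` into the `o`-th stage of its automorphism tower -/
def embed (T : AutTower G) (o : Ordinal.{u}) : G →* ↥(T.Stage o) :=
  (T.map (show (0 : Ordinal.{u}) ≤ o by simp)).comp T.emb0.toMonoidHom

/-- `G^{o+1} = G^o`, i.e. the inclusion of stage `o` into stage `o+1` is onto -/
def StabilizesAt (T : AutTower G) (o : Ordinal.{u}) : Prop :=
  Function.Surjective (T.map (show o ≤ o + 1 from le_self_add))

end AutTower

section SpecialPair

variable {H : Type u} [Group H]

/-- There is a group isomorphism from `⟨A ∪ {x}⟩` onto `⟨A ∪ {y}⟩` fixing `A`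
pointwise and sending `x` to `y`. -/
def FixesAndSends (A : Set H) (x y : H) : Prop :=
  ∃ φ : ↥(Subgroup.closure (A ∪ {x})) ≃* ↥(Subgroup.closure (A ∪ {y})),
    (∀ g : ↥(Subgroup.closure (A ∪ {x})), (g : H) ∈ A → ((φ g : H) = (g : H))) ∧
    (∀ g : ↥(Subgroup.closure (A ∪ {x})), (g : H) = x → ((φ g : H) = y))

end SpecialPair

/-- `(G, A)` is a special pair: whenever there is an isomorphism from `⟨A ∪ {x}⟩`
onto `⟨A ∪ {y}⟩` fixing `A` pointwise and sending `x` to `y`, then `x = y`. -/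
def IsSpecialPair (H : Type u) [Group H] (A : Set H) : Prop :=
  ∀ x y : H, FixesAndSends A x y → x = y

section Aux
namespace ATP
variable {H : Type u} {K : Type u} [Group H] [Group K]

def ev (A : Set H) (x : H) : FreeGroup (Option ↥A) →* H :=
  FreeGroup.lift (fun o => o.elim x Subtype.val)

@[simp] lemma ev_some (A : Set H) (x : H) (a : ↥A) :
    ev A x (FreeGroup.of (some a)) = (a : H) := by simp [ev]

@[simp] lemma ev_none (A : Set H) (x : H) :
    ev A x (FreeGroup.of none) = x := by simp [ev]

def P (H : Type u) [Group H] (A : Set H) : Prop :=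
  ∀ x y : H, (ev A x).ker = (ev A y).ker → x = y

lemma ev_range (A : Set H) (x : H) :
    (ev A x).range = Subgroup.closure (A ∪ {x}) := by
  rw [ev, FreeGroup.range_lift_eq_closure]
  congr 1
  ext h
  constructor
  · rintro ⟨(_ | b), rfl⟩
    · exact Or.inr rfl
    · exact Or.inl b.2
  · rintro (hA | rfl)
    · exact ⟨some ⟨h, hA⟩, rfl⟩
    · exact ⟨none, rfl⟩

lemma ker_transfer (j : H →* K) (hj : Function.Injective j) (A : Set H) (x y : H)
    (h : (ev (j '' A) (j x)).ker = (ev (j '' A) (j y)).ker) :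
    (ev A x).ker = (ev A y).ker := by
  set r : FreeGroup (Option ↥A) →* FreeGroup (Option ↥(j '' A)) :=
    FreeGroup.map (Option.map fun b => (⟨j b, ⟨b, b.2, rfl⟩⟩ : ↥(⇑j '' A)))
  have key : ∀ z : H, (ev (j '' A) (j z)).comp r = j.comp (ev A z) := by
    intro z
    apply FreeGroup.ext_hom
    rintro (_ | b) <;> simp [r]
  ext w
  have hx := congrArg (fun f => f w) (key x)
  have hy := congrArg (fun f => f w) (key y)
  simp only [MonoidHom.comp_apply] at hx hy
  constructor <;> intro hw
  · have : r w ∈ (ev (j '' A) (j x)).ker := by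
      simp only [MonoidHom.mem_ker] at hw ⊢
      rw [hx, hw, map_one]
    rw [h] at this
    simp only [MonoidHom.mem_ker] at this ⊢
    apply hj; rw [← hy, this, map_one]
  · have : r w ∈ (ev (j '' A) (j y)).ker := by
      simp only [MonoidHom.mem_ker] at hw ⊢
      rw [hy, hw, map_one]
    rw [← h] at this
    simp only [MonoidHom.mem_ker] at this ⊢
    apply hj; rw [← hx, this, map_one]

lemma P_of_mulEquiv (e : H ≃* K) {A : Set H} (hP : P H A) : P K (⇑e '' A) := by
  intro x y h
  have hx : x = e.toMonoidHom (e.symm x) := (e.apply_symm_apply x).symm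
  have hy : y = e.toMonoidHom (e.symm y) := (e.apply_symm_apply y).symm
  rw [hx, hy] at h ⊢
  have hA : (⇑e '' A) = (⇑e.toMonoidHom '' A) := rfl
  rw [hA] at h
  exact congrArg _ (hP _ _ (ker_transfer e.toMonoidHom e.injective A _ _ h))

lemma conj_inj (hc : Subgroup.center H = ⊥) :
    Function.Injective (MulAut.conj : H →* MulAut H) := by
  intro a b hab
  have h : ∀ h : H, a * h * a⁻¹ = b * h * b⁻¹ := fun h =>
    congrArg (fun e => (e : MulAut H) h) hab
  have hz : b⁻¹ * a ∈ Subgroup.center H := by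
    rw [Subgroup.mem_center_iff]
    intro g
    calc g * (b⁻¹ * a) = b⁻¹ * (b * g * b⁻¹) * b * (b⁻¹ * a) := by group
    _ = b⁻¹ * (a * g * a⁻¹) * b * (b⁻¹ * a) := by rw [h g]
    _ = b⁻¹ * a * g := by group
  rw [hc, Subgroup.mem_bot] at hz
  have : b * (b⁻¹ * a) = b * 1 := by rw [hz]
  simpa using this

lemma conj_mulAut (x : MulAut H) (a : H) :
    MulAut.conj (x a) = x * MulAut.conj a * x⁻¹ := by
  ext h
  simp [MulAut.conj_apply, MulAut.mul_apply, MulAut.inv_def, mul_assoc]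

lemma center_mulAut (hc : Subgroup.center H = ⊥) :
    Subgroup.center (MulAut H) = ⊥ := by
  rw [Subgroup.eq_bot_iff_forall]
  intro f hf
  rw [Subgroup.mem_center_iff] at hf
  ext g
  have h1 : f * MulAut.conj g * f⁻¹ = MulAut.conj g := by
    rw [← hf (MulAut.conj g)]; group
  rw [← conj_mulAut] at h1
  have := conj_inj hc h1
  simpa using this

lemma center_of_mulEquiv (e : H ≃* K)
    (hc : Subgroup.center K = ⊥) : Subgroup.center H = ⊥ := by
  rw [Subgroup.eq_bot_iff_forall]
  intro z hz
  rw [Subgroup.mem_center_iff] at hz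
  have h1 : e z ∈ Subgroup.center K := by
    rw [Subgroup.mem_center_iff]
    intro k
    calc k * e z = e (e.symm k * z) := by simp [map_mul]
    _ = e (z * e.symm k) := by rw [← hz (e.symm k)]
    _ = e z * k := by simp [map_mul]
  rw [hc, Subgroup.mem_bot] at h1
  have := congrArg e.symm h1
  simpa using this

lemma P_mulAut (hc : Subgroup.center H = ⊥) {A : Set H} (hP : P H A) :
    P (MulAut H) (⇑(MulAut.conj : H →* MulAut H) '' A) := by
  set C : Set (MulAut H) := ⇑(MulAut.conj : H →* MulAut H) '' A with hC
  intro x y hker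
  have step1 : ∀ a : ↥A, x (a : H) = y (a : H) := by
    intro a
    set ca : ↥C := ⟨MulAut.conj (a : H), ⟨a, a.2, rfl⟩⟩ with hca
    set s : FreeGroup (Option ↥A) →* FreeGroup (Option ↥C) :=
      FreeGroup.lift (fun o => o.elim
        (FreeGroup.of (none : Option ↥C) * FreeGroup.of (some ca) *
          (FreeGroup.of (none : Option ↥C))⁻¹)
        (fun b => FreeGroup.of (some (⟨MulAut.conj (b : H), ⟨b, b.2, rfl⟩⟩ : ↥C)))) with hs
    have key : ∀ z : MulAut H,
        (ev C z).comp s = (MulAut.conj : H →* MulAut H).comp (ev A (z (a : H))) := by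
      intro z
      apply FreeGroup.ext_hom
      rintro (_ | b)
      · simp [s, ca, conj_mulAut]
      · simp [s]
    apply hP
    ext w
    have hx := congrArg (fun f => f w) (key x)
    have hy := congrArg (fun f => f w) (key y)
    simp only [MonoidHom.comp_apply] at hx hy
    have hiff : ∀ (z : MulAut H) (h : H), MulAut.conj h = ev C z (s w) →
        (h = 1 ↔ s w ∈ (ev C z).ker) := by
      intro z h hh
      rw [MonoidHom.mem_ker, ← hh]
      constructor
      · rintro rfl; simp
      · intro h1; exact conj_inj hc (by simpa using h1)
    simp only [MonoidHom.mem_ker]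
    rw [show (ev A (x (a : H)) w = 1 ↔ s w ∈ (ev C x).ker) from hiff x _ hx.symm,
        show (ev A (y (a : H)) w = 1 ↔ s w ∈ (ev C y).ker) from hiff y _ hy.symm, hker]
  set π : MulAut H := x⁻¹ * y with hπ
  have πfix : ∀ a : ↥A, π (a : H) = (a : H) := by
    intro a
    rw [hπ, MulAut.mul_apply, ← step1 a, MulAut.inv_def, MulEquiv.symm_apply_apply]
  have πid : ∀ g : H, π g = g := by
    intro g
    refine (hP g (π g) ?_).symm
    have key2 : ev A (π g) = (MulEquiv.toMonoidHom (π : H ≃* H)).comp (ev A g) := by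
      apply FreeGroup.ext_hom
      rintro (_ | b) <;> simp [πfix]
    ext w
    rw [key2]
    simp only [MonoidHom.mem_ker, MonoidHom.comp_apply]
    constructor
    · intro h1; rw [h1, map_one]
    · intro h1
      have := π.injective (by simpa using h1)
      simpa using this
  ext g
  have h2 := πid g
  rw [hπ, MulAut.mul_apply, MulAut.inv_def] at h2
  have := congrArg x h2
  simp only [MulEquiv.apply_symm_apply] at this
  exact this.symm

noncomputable def kerEq {F : Type u} [Group F] (f g : F →* H) (h : f.ker = g.ker) :
    ↥f.range ≃* ↥g.range :=
  (QuotientGroup.quotientKerEquivRange f).symm.trans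
    ((QuotientGroup.quotientMulEquivOfEq h).trans (QuotientGroup.quotientKerEquivRange g))

lemma kerEq_apply {F : Type u} [Group F] (f g : F →* H) (h : f.ker = g.ker) (w : F) :
    (kerEq f g h ⟨f w, ⟨w, rfl⟩⟩ : H) = g w := by
  have h1 : (QuotientGroup.quotientKerEquivRange f).symm ⟨f w, ⟨w, rfl⟩⟩ =
      QuotientGroup.mk w := by
    rw [MulEquiv.symm_apply_eq]; rfl
  simp [kerEq, h1]; rfl

end ATP
end Aux
section Counting
namespace ATP
variable {H : Type u} [Group H]

lemma card_le_of_P {A : Set H} (hP : P H A) :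
    Cardinal.mk H ≤ 2 ^ (max (Cardinal.mk ↥A) Cardinal.aleph0) := by
  classical
  set μ := max (Cardinal.mk ↥A) Cardinal.aleph0 with hμdef
  have hμ : Cardinal.aleph0 ≤ μ := le_max_right _ _
  have hinj : Function.Injective
      (fun x : H => ((ev A x).ker : Set (FreeGroup (Option ↥A)))) := by
    intro x y h
    exact hP x y (SetLike.ext' h)
  calc Cardinal.mk H ≤ Cardinal.mk (Set (FreeGroup (Option ↥A))) :=
        Cardinal.mk_le_of_injective hinj
  _ = 2 ^ Cardinal.mk (FreeGroup (Option ↥A)) := Cardinal.mk_set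
  _ ≤ 2 ^ μ := by
      apply Cardinal.power_le_power_left two_ne_zero
      calc Cardinal.mk (FreeGroup (Option ↥A))
          ≤ Cardinal.mk (List (Option ↥A × Bool)) :=
            Cardinal.mk_le_of_injective FreeGroup.toWord_injective
      _ ≤ max Cardinal.aleph0 (Cardinal.mk (Option ↥A × Bool)) :=
            Cardinal.mk_list_le_max _
      _ ≤ μ := by
          apply max_le hμ
          have h1 : Cardinal.mk (Option ↥A × Bool) =
              (Cardinal.mk ↥A + 1) * 2 := by
            simp [Cardinal.mk_option, Cardinal.mk_prod]
          rw [h1]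
          have h2 : Cardinal.mk ↥A + 1 ≤ μ + μ :=
            add_le_add (le_max_left _ _) (le_trans (by simp) hμ)
          have h3 : (2 : Cardinal) ≤ μ := le_trans (by exact_mod_cast (Cardinal.nat_lt_aleph0 2).le) hμ
          calc (Cardinal.mk ↥A + 1) * 2 ≤ (μ + μ) * μ := mul_le_mul' h2 h3
          _ = μ * μ := by rw [Cardinal.add_eq_self hμ]
          _ = μ := Cardinal.mul_eq_self hμ

end ATP
end Counting

section Tower
namespace ATP
variable {G : Type u} [Group G]

lemma embed_map (T : AutTower G) {o₁ o₂ : Ordinal.{u}} (h : o₁ ≤ o₂) (g : G) :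
    T.map h (T.embed o₁ g) = T.embed o₂ g :=
  T.map_comp _ _ _

lemma image_embed (T : AutTower G) {o₁ o₂ : Ordinal.{u}} (h : o₁ ≤ o₂) (A : Set G) :
    ⇑(T.embed o₂) '' A = ⇑(T.map h) '' (⇑(T.embed o₁) '' A) := by
  rw [← Set.image_comp]
  exact Set.image_congr fun g _ => (embed_map T h g).symm

lemma tower_inv (T : AutTower G) (A : Set G) (hG : Subgroup.center G = ⊥)
    (hPG : P G A) (o : Ordinal.{u}) :
    Subgroup.center ↥(T.Stage o) = ⊥ ∧ P ↥(T.Stage o) (⇑(T.embed o) '' A) := by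
  induction o using Ordinal.induction with
  | _ o IH =>
  rcases Ordinal.zero_or_succ_or_isSuccLimit o with h0 | ⟨a, ha⟩ | hlim
  · subst h0
    constructor
    · exact center_of_mulEquiv T.emb0.symm hG
    · have hp := P_of_mulEquiv T.emb0 hPG
      have hset : ⇑T.emb0 '' A = ⇑(T.embed 0) '' A :=
        Set.image_congr fun g _ => (T.map_id 0 (T.emb0 g)).symm
      rwa [hset] at hp
  · have ha' : o = a + 1 := by rw [← ha, Ordinal.add_one_eq_succ]
    subst ha'
    have hlt : a < a + 1 := by
      rw [Ordinal.add_one_eq_succ]; exact Order.lt_succ a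
    obtain ⟨hc, hp⟩ := IH a hlt
    constructor
    · exact center_of_mulEquiv (T.succIso a) (center_mulAut hc)
    · have hp' := P_of_mulEquiv (T.succIso a).symm (P_mulAut hc hp)
      have hset : ⇑(T.succIso a).symm '' (⇑(MulAut.conj : ↥(T.Stage a) →* MulAut ↥(T.Stage a)) ''
          (⇑(T.embed a) '' A)) = ⇑(T.embed (a + 1)) '' A := by
        rw [← Set.image_comp, ← Set.image_comp]
        apply Set.image_congr
        intro g _
        have h1 := T.succIso_map a (T.embed a g)
        have h2 := congrArg (T.succIso a).symm h1
        rw [MulEquiv.symm_apply_apply] at h2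
        simp only [Function.comp_apply]
        rw [← h2, embed_map]
      rwa [hset] at hp'
  · constructor
    · rw [Subgroup.eq_bot_iff_forall]
      intro z hz
      obtain ⟨β, hβ, x', hx'⟩ := T.limit_covers o hlim z
      have hzc := Subgroup.mem_center_iff.mp hz
      have hx'c : x' ∈ Subgroup.center ↥(T.Stage β) := by
        rw [Subgroup.mem_center_iff]
        intro w
        apply T.map_injective hβ.le
        rw [map_mul, map_mul, hx', hzc (T.map hβ.le w)]
      rw [(IH β hβ).1, Subgroup.mem_bot] at hx'c
      rw [← hx', hx'c, map_one]
    · intro x y hk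
      obtain ⟨β₁, hβ₁, x₁, hx₁⟩ := T.limit_covers o hlim x
      obtain ⟨β₂, hβ₂, y₂, hy₂⟩ := T.limit_covers o hlim y
      have hβ : max β₁ β₂ < o := max_lt hβ₁ hβ₂
      set x' : ↥(T.Stage (max β₁ β₂)) := T.map (le_max_left β₁ β₂) x₁ with hx'
      set y' : ↥(T.Stage (max β₁ β₂)) := T.map (le_max_right β₁ β₂) y₂ with hy'
      have hxe : x = T.map hβ.le x' := by rw [hx', T.map_comp, hx₁]
      have hye : y = T.map hβ.le y' := by rw [hy', T.map_comp, hy₂]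
      have hset := image_embed T hβ.le A
      rw [hset, hxe, hye] at hk
      have := (IH _ hβ).2 x' y'
        (ker_transfer (T.map hβ.le) (T.map_injective hβ.le) _ x' y' hk)
      rw [hxe, hye, this]

end ATP
end Tower

section FAS
namespace ATP
variable {H : Type u} [Group H]

lemma fixesAndSends_of_kerEq {A : Set H} {x y : H}
    (hker : (ev A x).ker = (ev A y).ker) : FixesAndSends A x y := by
  set phi : ↥(Subgroup.closure (A ∪ {x})) ≃* ↥(Subgroup.closure (A ∪ {y})) :=
    (MulEquiv.subgroupCongr (ev_range A x).symm).trans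
      ((kerEq _ _ hker).trans (MulEquiv.subgroupCongr (ev_range A y))) with hphi
  have main : ∀ (g : ↥(Subgroup.closure (A ∪ {x}))) (w : FreeGroup (Option ↥A)),
      (g : H) = ev A x w → (phi g : H) = ev A y w := by
    intro g w hgw
    have h1 : MulEquiv.subgroupCongr (ev_range A x).symm g =
        (⟨ev A x w, ⟨w, rfl⟩⟩ : ↥(ev A x).range) := by
      apply Subtype.ext
      simpa [MulEquiv.subgroupCongr_apply] using hgw
    rw [hphi]
    simp only [MulEquiv.trans_apply, h1, MulEquiv.subgroupCongr_apply]
    exact kerEq_apply _ _ hker w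
  refine ⟨phi, fun g hg => ?_, fun g hg => ?_⟩
  · have := main g (FreeGroup.of (some ⟨(g : H), hg⟩)) (by simp)
    simpa using this
  · have := main g (FreeGroup.of none) (by simpa using hg)
    simpa using this

end ATP
end FAS

/-- If `G` is centerless and `(G, A)` is a special pair, then the automorphism tower
of `G` stabilizes and `τ_G < (2^{max(|A|, ℵ₀)})⁺`. -/
theorem autTower_stabilizes_of_specialPair {G : Type u} [Group G]
    (hG : Subgroup.center G = ⊥) (A : Set G) (hspec : IsSpecialPair G A)
    (T : AutTower G) :
    ∃ α : Ordinal.{u},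
      α < (Order.succ ((2 : Cardinal.{u}) ^ (max (Cardinal.mk ↥A) Cardinal.aleph0))).ord ∧
      T.StabilizesAt α := by
  classical
  set μ := max (Cardinal.mk ↥A) Cardinal.aleph0 with hmudef
  set κ := (2 : Cardinal.{u}) ^ μ with hkdef
  set Λ := (Order.succ κ).ord with hLdef
  have hPG : ATP.P G A := fun x y hk => hspec x y (ATP.fixesAndSends_of_kerEq hk)
  have inv := ATP.tower_inv T A hG hPG
  have bound : ∀ o : Ordinal.{u}, Cardinal.mk ↥(T.Stage o) ≤ κ := by
    intro o
    refine le_trans (ATP.card_le_of_P (inv o).2) ?_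
    rw [hkdef]
    apply Cardinal.power_le_power_left two_ne_zero
    exact max_le (le_trans Cardinal.mk_image_le (le_max_left _ _)) (le_max_right _ _)
  by_contra hcon
  push_neg at hcon
  have hcon' : ∀ β : Ordinal.{u}, β < Λ →
      ∃ z : ↥(T.Stage (β + 1)), ∀ w, T.map (show β ≤ β + 1 from le_self_add) w ≠ z := by
    intro β hβ
    have h1 : ¬ ∀ z, ∃ w, T.map (show β ≤ β + 1 from le_self_add) w = z := hcon β hβ
    push_neg at h1
    exact h1
  choose xw hxw using hcon'
  have succle : ∀ {β : Ordinal.{u}}, β < Λ → β + 1 ≤ Λ := by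
    intro β h
    rw [Ordinal.add_one_eq_succ]
    exact Order.succ_le_of_lt h
  set f : Λ.ToType → ↥(T.Stage Λ) := fun i =>
    T.map (succle (Ordinal.typein_lt_self i)) (xw _ (Ordinal.typein_lt_self i)) with hf
  have aux : ∀ (β γ : Ordinal.{u}) (hβ : β < Λ) (hγ : γ < Λ), β < γ →
      T.map (succle hβ) (xw β hβ) ≠ T.map (succle hγ) (xw γ hγ) := by
    intro β γ hβ hγ hlt heq
    have hb1g : β + 1 ≤ γ := by
      rw [Ordinal.add_one_eq_succ]; exact Order.succ_le_of_lt hlt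
    apply hxw γ hγ (T.map hb1g (xw β hβ))
    apply T.map_injective (succle hγ)
    rw [T.map_comp, T.map_comp]
    exact heq
  have finj : Function.Injective f := by
    intro i j hij
    by_contra hne
    have hne' : @Ordinal.typein Λ.ToType (· < ·) isWellOrder_lt i ≠
        @Ordinal.typein Λ.ToType (· < ·) isWellOrder_lt j :=
      fun h => hne (@Ordinal.typein_injective Λ.ToType (· < ·) isWellOrder_lt i j h)
    rcases hne'.lt_or_gt with h | h
    · exact aux _ _ _ _ h hij
    · exact aux _ _ _ _ h hij.symm
  have hcard := Cardinal.mk_le_of_injective finj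
  rw [Cardinal.mk_toType, hLdef, Cardinal.card_ord] at hcard
  exact absurd (le_trans hcard (bound Λ)) (Order.lt_succ κ).not_ge
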